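/- Let w be a real number and d_1 ≤ ... ≤ d_r positive integers, with α_i = i + (w - d_1 - ... - d_i)/d_i. If i ≤ r-1 and d_i < d_{i+1}, then α_i ≥ α_{i+1} if and only if d_1 + ... + d_i ≤ w. -/

import Mathlib

open Finset

/-- if `d i < d (i+1)` then `α i ≥ α (i+1)` iff `d 1 + ... + d i ≤ w`. -/
theorem stmt_1 (r : ℕ) (w : ℝ) (d : Fin r → ℕ) (hd : ∀ i, 0 < d i) (hmono : Monotone d)
    (α : Fin r → ℝ)
    (hα : ∀ i : Fin r, α i = ((i : ℕ) + 1 : ℝ) + (w - ∑ j ∈ Iic i, (d j : ℝ)) / (d i : ℝ))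
    (i : Fin r) (h : (i : ℕ) + 1 < r)
    (hlt : d i < d ⟨(i : ℕ) + 1, h⟩) :
    α i ≥ α ⟨(i : ℕ) + 1, h⟩ ↔ (∑ j ∈ Iic i, (d j : ℝ)) ≤ w := by
  set i' : Fin r := ⟨(i : ℕ) + 1, h⟩ with hi'
  have hii : (i : Fin r) < i' := by simp [hi', Fin.lt_def]
  have hset : Iic i' = insert i' (Iic i) := by
    ext x
    simp only [mem_Iic, mem_insert, Fin.le_def, Fin.ext_iff, hi']
    omega
  have hnotmem : i' ∉ Iic i := by simp [mem_Iic]; exact hii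
  have hsum : ∑ j ∈ Iic i', (d j : ℝ) = (d i' : ℝ) + ∑ j ∈ Iic i, (d j : ℝ) := by
    rw [hset, sum_insert hnotmem]
  have hdi : (0:ℝ) < (d i : ℝ) := by exact_mod_cast hd i
  have hdi' : (0:ℝ) < (d i' : ℝ) := by exact_mod_cast hd i'
  have hltR : (d i : ℝ) < (d i' : ℝ) := by exact_mod_cast hlt
  set S := ∑ j ∈ Iic i, (d j : ℝ)
  have key : α i - α i' = (w - S) * ((d i' : ℝ) - (d i : ℝ)) / ((d i : ℝ) * (d i' : ℝ)) := by
    rw [hα i, hα i', hsum]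
    simp only [hi']
    push_cast
    have hS : ∑ j ∈ Iic i, (d j : ℝ) = S := rfl
    have hne : ((d ⟨(i : ℕ) + 1, h⟩ : ℕ) : ℝ) ≠ 0 := hdi'.ne'
    rw [hS]
    field_simp
    ring
  constructor
  · intro hge
    have h1 : 0 ≤ α i - α i' := by linarith [hge]
    rw [key] at h1
    have h2 : 0 ≤ (w - S) * ((d i' : ℝ) - (d i : ℝ)) :=
      (div_nonneg_iff.mp h1).elim (fun ⟨a, _⟩ => a)
        (fun ⟨_, b⟩ => by nlinarith)
    nlinarith
  · intro hle
    have : 0 ≤ α i - α i' := by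
      rw [key]
      apply div_nonneg
      · nlinarith
      · positivity
    linarith
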